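/- arXiv:1705.10987 — 4 statements merged into one kernel-verified Lean document; each statement's English description precedes it below -/
import Mathlib

section
/- Let b ≥ 2 and let A be a function from {1,…,n} to ℕ with n = b^e. Define the layered structure where level ℓ+1 stores, for each block of b consecutive elements of A, the b-1 prefix sums of the first b-1 elements, and recursively for the array A' of block totals A'[j] = ∑_{l=1}^b A[(j-1)b + l]. Then for every i with 1 ≤ i ≤ n, writing i in base b as (x_1…x_{ℓ+1})_b, the sum ∑_{t=1}^i A[t] equals the sum over all levels j with x_j ≠ 0 of T_b^j(A)[o_j], where o_1 = x_1 and o_j = (b-1)·(x_1…x_{j-1})_b + x_j for j > 1. -/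
open Finset

/-- Entry at offset `o = (b-1)·q + r` (with `1 ≤ r ≤ b-1`) of level `j` of the layered
`b`-ary Fenwick tree over `A` (indexed from 1, `n = b^ℓ`): it stores the sum of the
positions of `A` in the interval `(q·b·b^{ℓ+1-j}, (q·b + r)·b^{ℓ+1-j}]`. -/
def fenEntry (b ℓ j : ℕ) (A : ℕ → ℕ) (o : ℕ) : ℕ :=
  ∑ t ∈ Finset.Ioc ((((o - 1) / (b - 1)) * b) * b ^ (ℓ + 1 - j))
      ((((o - 1) / (b - 1)) * b + ((o - 1) % (b - 1) + 1)) * b ^ (ℓ + 1 - j)), A t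

private lemma fen_tele (s : ℕ → ℕ) (hmono : ∀ j, s j ≤ s (j+1)) (A : ℕ → ℕ) :
    ∀ m, ∑ j ∈ Finset.range m, ∑ t ∈ Finset.Ioc (s j) (s (j+1)), A t
      = ∑ t ∈ Finset.Ioc (s 0) (s m), A t := by
  intro m
  induction m with
  | zero => simp
  | succ m ih =>
    rw [Finset.sum_range_succ, ih,
      Finset.sum_Ioc_consecutive _ ((monotone_nat_of_le_succ hmono) (Nat.zero_le m)) (hmono m)]

/-- Correctness of the `sum` query in the `b`-ary Fenwick tree: writing
`i = (x_1 … x_{ℓ+1})_b` in base `b` (here `0`-indexed: digit `j` has weight `b^{ℓ-j}`),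
the prefix sum `∑_{t=1}^i A[t]` equals the sum, over levels `j` with nonzero digit,
of the tree entry at offset `o_j = (b-1)·(x_1…x_{j-1})_b + x_j`. -/
theorem fenwick_sum_correct (b e n : ℕ) (hb : 2 ≤ b) (hn : n = b ^ e)
    (A : ℕ → ℕ) (i : ℕ) (hi1 : 1 ≤ i) (hin : i ≤ n)
    (x : ℕ → ℕ) (hx : ∀ j < e + 1, x j < b)
    (hrep : i = ∑ j ∈ Finset.range (e + 1), x j * b ^ (e - j)) :
    ∑ t ∈ Finset.Icc 1 i, A t =
      ∑ j ∈ (Finset.range (e + 1)).filter (fun j => x j ≠ 0),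
        fenEntry b e (j + 1) A
          ((b - 1) * (∑ t ∈ Finset.range j, x t * b ^ (j - 1 - t)) + x j) := by
  set s : ℕ → ℕ := fun j => ∑ t ∈ Finset.range j, x t * b ^ (e - t) with hs
  set p : ℕ → ℕ := fun j => ∑ t ∈ Finset.range j, x t * b ^ (j - 1 - t) with hp
  have hb1 : 0 < b - 1 := by omega
  have hmono : ∀ j, s j ≤ s (j+1) := by
    intro j
    simp only [hs, Finset.sum_range_succ]
    exact Nat.le_add_right _ _
  have hs0 : s 0 = 0 := by simp [hs]
  have hse : s (e+1) = i := hrep.symm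
  have hpb : ∀ j ≤ e, p j * b * b ^ (e - j) = s j := by
    intro j hj
    simp only [hp, hs, Finset.sum_mul]
    apply Finset.sum_congr rfl
    intro t ht
    have ht' := Finset.mem_range.mp ht
    have hexp : j - 1 - t + 1 + (e - j) = e - t := by omega
    calc x t * b ^ (j - 1 - t) * b * b ^ (e - j)
        = x t * b ^ (j - 1 - t + 1 + (e - j)) := by rw [pow_add, pow_add, pow_one]; ring
      _ = x t * b ^ (e - t) := by rw [hexp]
  have key : ∀ j < e + 1, x j ≠ 0 →
      fenEntry b e (j + 1) A ((b - 1) * p j + x j)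
        = ∑ t ∈ Finset.Ioc (s j) (s (j+1)), A t := by
    intro j hj hxj
    have hje : j ≤ e := by omega
    have hx1 : 1 ≤ x j := Nat.one_le_iff_ne_zero.mpr hxj
    have hxb : x j < b := hx j hj
    have harg : (b - 1) * p j + x j - 1 = (b - 1) * p j + (x j - 1) := by omega
    have hdiv : ((b - 1) * p j + x j - 1) / (b - 1) = p j := by
      rw [harg, Nat.mul_add_div hb1, Nat.div_eq_of_lt (by omega)]
      omega
    have hmod : ((b - 1) * p j + x j - 1) % (b - 1) = x j - 1 := by
      rw [harg, Nat.mul_add_mod, Nat.mod_eq_of_lt (by omega)]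
    have hlev : e + 1 - (j + 1) = e - j := by omega
    rw [fenEntry, hdiv, hmod, hlev]
    have h1 : x j - 1 + 1 = x j := by omega
    rw [h1, hpb j hje]
    have h2 : (p j * b + x j) * b ^ (e - j) = s (j + 1) := by
      rw [add_mul, hpb j hje]
      simp [hs, Finset.sum_range_succ]
    rw [h2]
  have hIcc : Finset.Icc 1 i = Finset.Ioc 0 i := by
    rw [← Finset.Icc_add_one_left_eq_Ioc]; rfl
  have hL : ∑ t ∈ Finset.Icc 1 i, A t
      = ∑ j ∈ Finset.range (e+1), ∑ t ∈ Finset.Ioc (s j) (s (j+1)), A t := by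
    rw [fen_tele s hmono A (e+1), hs0, hse, hIcc]
  rw [hL, Finset.sum_filter]
  apply Finset.sum_congr rfl
  intro j hj
  have hj' := Finset.mem_range.mp hj
  by_cases h : x j = 0
  · simp only [h, ne_eq, not_true_eq_false, if_false]
    have : s (j+1) = s j := by simp [hs, Finset.sum_range_succ, h]
    rw [this]
    simp
  · simp only [ne_eq, h, not_false_eq_true, if_true]
    exact (key j hj' h).symm
end

section
/- In the binary Fenwick tree over n = 2^e elements, for every index i, the tree entry at position i equals ∑_{t = i - 2^{ν(i)} + 1}^{i} A[t], where 2^{ν(i)} is the largest power of two dividing i; and the recursive construction (replace A[2i] with A[2i-1]+A[2i] in each block of 2, then recurse on even positions) produces exactly this array. -/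
open Finset

/-- Fenwick's recursive construction over an array of `2^e` elements (indexed from 1):
if `e = 0` leave `A` unchanged; otherwise replace `A[2i]` by `A[2i-1] + A[2i]` in each
block of two and recurse on the array of block sums, which occupies the even positions. -/
def fenRec : ℕ → (ℕ → ℕ) → (ℕ → ℕ)
  | 0, A => A
  | e + 1, A => fun i =>
      if i % 2 = 1 then A i
      else fenRec e (fun j => A (2 * j - 1) + A (2 * j)) (i / 2)

lemma pair_sum (A : ℕ → ℕ) (a : ℕ) : ∀ b : ℕ,
    ∑ t ∈ Finset.Ioc a b, (A (2 * t - 1) + A (2 * t)) = ∑ s ∈ Finset.Ioc (2 * a) (2 * b), A s := by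
  intro b
  induction b with
  | zero => simp
  | succ b ih =>
    rcases le_or_gt (b + 1) a with h | h
    · rw [Finset.Ioc_eq_empty (by omega), Finset.Ioc_eq_empty (by omega)]; simp
    · have ha : a ≤ b := by omega
      rw [Finset.sum_Ioc_succ_top (by omega), ih]
      have h1 : 2 * (b + 1) = (2 * b + 1) + 1 := by ring
      rw [h1, Finset.sum_Ioc_succ_top (by omega), Finset.sum_Ioc_succ_top (by omega)]
      have h3 : 2 * b + 1 + 1 - 1 = 2 * b + 1 := rfl
      rw [h3]
      ring

/-- In the binary Fenwick tree over `n = 2^e` elements, the tree entry at position `i`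
equals `∑_{t = i - 2^{ν(i)} + 1}^{i} A[t]`, where `2^{ν(i)}` is the largest power of two
dividing `i`; i.e., the recursive construction produces exactly this array. -/
theorem fenwick_binary_entries (e : ℕ) (A : ℕ → ℕ) :
    ∀ i : ℕ, 1 ≤ i → i ≤ 2 ^ e →
      fenRec e A i = ∑ t ∈ Finset.Ioc (i - 2 ^ (padicValNat 2 i)) i, A t := by
  induction e generalizing A with
  | zero =>
    intro i h1 h2
    interval_cases i
    simp [fenRec]
  | succ e ih =>
    intro i h1 h2
    rcases Nat.even_or_odd i with ⟨j, hj⟩ | hodd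
    · have hj' : i = 2 * j := by omega
      subst hj'
      have hj1 : 1 ≤ j := by omega
      have hj2 : j ≤ 2 ^ e := by
        rw [pow_succ] at h2; omega
      have hmod : 2 * j % 2 = 0 := by omega
      have hstep : fenRec (e + 1) A (2 * j)
          = fenRec e (fun j => A (2 * j - 1) + A (2 * j)) (2 * j / 2) := by
        simp [fenRec, hmod]
      rw [hstep]
      have hdiv : 2 * j / 2 = j := by omega
      rw [hdiv, ih _ j hj1 hj2]
      have hval : padicValNat 2 (2 * j) = padicValNat 2 j + 1 := by
        rw [padicValNat.mul (by norm_num) (by omega)]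
        simp [padicValNat.self]
        omega
      have hle : 2 ^ padicValNat 2 j ≤ j :=
        Nat.le_of_dvd (by omega) (pow_padicValNat_dvd)
      rw [pair_sum, hval]
      congr 2
      rw [pow_succ]
      omega
    · have hmod : i % 2 = 1 := Nat.odd_iff.mp hodd
      have hstep : fenRec (e + 1) A i = A i := by simp [fenRec, hmod]
      rw [hstep]
      have hval : padicValNat 2 i = 0 := by
        rw [padicValNat.eq_zero_iff]
        right; right
        omega
      have hIoc : Finset.Ioc (i - 1) i = {i} := by
        ext x; simp; omega
      rw [hval, pow_zero, hIoc, Finset.sum_singleton]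
end

section
/- The recurrence S_b(1,k) = k, S_b(n,k) = (n(b-1)/b)(k + log b) + nw/b + S_b(n/b, k + log b) for n = b^e satisfies S_b(n,k) ≤ nk + 2n·log b + nw/(b-1). -/
/-- The recurrence `S_b(1,k) = k`,
`S_b(n,k) = (n(b-1)/b)(k + log b) + nw/b + S_b(n/b, k + log b)` for `n = b^e`
(the extra `nw/b` term accounting for one `w`-bit word per block of `b-1` entries)
satisfies `S_b(n,k) ≤ nk + 2n·log b + nw/(b-1)` (log in base 2). -/
theorem fenwick_space_with_words (b : ℕ) (hb : 2 ≤ b) (w : ℝ) (hw : 0 ≤ w)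
    (S : ℕ → ℝ → ℝ)
    (hS1 : ∀ k : ℝ, S 1 k = k)
    (hSrec : ∀ (e : ℕ) (k : ℝ), 1 ≤ e →
      S (b ^ e) k = ((b : ℝ) ^ e * ((b : ℝ) - 1) / (b : ℝ)) * (k + Real.logb 2 b)
        + (b : ℝ) ^ e * w / (b : ℝ)
        + S (b ^ (e - 1)) (k + Real.logb 2 b)) :
    ∀ (e : ℕ) (k : ℝ), 0 ≤ k →
      S (b ^ e) k ≤ (b : ℝ) ^ e * k + 2 * (b : ℝ) ^ e * Real.logb 2 b
        + (b : ℝ) ^ e * w / ((b : ℝ) - 1) := by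
  have hb2 : (2:ℝ) ≤ (b:ℝ) := by exact_mod_cast hb
  have hbpos : (0:ℝ) < (b:ℝ) := by linarith
  have hb1 : (0:ℝ) < (b:ℝ) - 1 := by linarith
  have hL : 0 ≤ Real.logb 2 b := Real.logb_nonneg one_lt_two (by linarith)
  set L := Real.logb 2 b with hLdef
  intro e
  induction e with
  | zero =>
      intro k hk
      simp only [pow_zero, Nat.cast_one, one_mul, pow_zero, hS1]
      have : 0 ≤ w / ((b:ℝ) - 1) := div_nonneg hw (le_of_lt hb1)
      simp only [pow_zero, one_mul, mul_one]
      nlinarith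
  | succ e ih =>
      intro k hk
      rw [hSrec (e+1) k (by omega)]
      simp only [Nat.add_sub_cancel]
      have hIH := ih (k + L) (by positivity)
      have hBpos : (0:ℝ) < (b:ℝ)^e := pow_pos hbpos e
      have hpow : (b:ℝ)^(e+1) = (b:ℝ)^e * (b:ℝ) := pow_succ _ _
      rw [hpow]
      have h1 : (b:ℝ)^e * (b:ℝ) * ((b:ℝ) - 1) / (b:ℝ) = (b:ℝ)^e * ((b:ℝ) - 1) := by
        field_simp
      have h2 : (b:ℝ)^e * (b:ℝ) * w / (b:ℝ) = (b:ℝ)^e * w := by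
        field_simp
      rw [h1, h2]
      have h3 : (b:ℝ)^e * (b:ℝ) * w / ((b:ℝ) - 1)
          = (b:ℝ)^e * w + (b:ℝ)^e * w / ((b:ℝ) - 1) := by
        field_simp; ring
      rw [h3]
      nlinarith [mul_nonneg (le_of_lt hBpos) hL, mul_nonneg hk (le_of_lt hBpos)]
end

section
/- Let i = (x_1 … x_{ℓ+1})_b in base b and for each j with x_j ≠ 0 define o_j = (b-1)·(x_1…x_{j-1})_b + x_j (with o_1 = x_1). Then for distinct levels j < j' with nonzero digits, the intervals of A covered by entry o_j at level j and entry o_{j'} at level j' are disjoint, and their union over all nonzero-digit levels is exactly [1, i]. -/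
open Finset

lemma fenwick_exists_step (f : ℕ → ℕ) (a : ℕ) :
    ∀ n, f 0 < a → a ≤ f n → ∃ j < n, f j < a ∧ a ≤ f (j + 1) := by
  intro n
  induction n with
  | zero => intro h1 h2; omega
  | succ n ih =>
    intro h1 h2
    by_cases h : a ≤ f n
    · obtain ⟨j, hj, h3, h4⟩ := ih h1 h
      exact ⟨j, by omega, h3, h4⟩
    · exact ⟨n, by omega, by omega, h2⟩

/-- Interval-decomposition lemma for the `sum` query of the `b`-ary Fenwick tree:
writing `i = (x_1 … x_{ℓ+1})_b` in base `b` (`0`-indexed digits, `n = b^e`, `ℓ = e`),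
the entry at offset `o_j = (b-1)·(x_1…x_{j-1})_b + x_j` of level `j` covers the interval
`((x_1…x_{j-1})_b·b·b^{ℓ+1-j}, ((x_1…x_{j-1})_b·b + x_j)·b^{ℓ+1-j}]` of `A`; these
intervals are pairwise disjoint over the levels with nonzero digit, and their union is
exactly `[1, i]`. -/
theorem fenwick_interval_decomposition (b e n : ℕ) (hb : 2 ≤ b) (hn : n = b ^ e)
    (i : ℕ) (hi1 : 1 ≤ i) (hin : i ≤ n)
    (x : ℕ → ℕ) (hx : ∀ j < e + 1, x j < b)
    (hrep : i = ∑ j ∈ Finset.range (e + 1), x j * b ^ (e - j)) :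
    (((Finset.range (e + 1)).filter (fun j => x j ≠ 0) : Set ℕ).PairwiseDisjoint
        (fun j => Finset.Ioc
          ((∑ t ∈ Finset.range j, x t * b ^ (j - 1 - t)) * b * b ^ (e - j))
          (((∑ t ∈ Finset.range j, x t * b ^ (j - 1 - t)) * b + x j) * b ^ (e - j)))) ∧
    ((Finset.range (e + 1)).filter (fun j => x j ≠ 0)).biUnion
        (fun j => Finset.Ioc
          ((∑ t ∈ Finset.range j, x t * b ^ (j - 1 - t)) * b * b ^ (e - j))
          (((∑ t ∈ Finset.range j, x t * b ^ (j - 1 - t)) * b + x j) * b ^ (e - j)))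
      = Finset.Icc 1 i := by
  set S : ℕ → ℕ := fun j => ∑ t ∈ Finset.range j, x t * b ^ (e - t) with hS
  have key : ∀ j ≤ e,
      (∑ t ∈ Finset.range j, x t * b ^ (j - 1 - t)) * b * b ^ (e - j) = S j := by
    intro j hj
    simp only [hS, Finset.sum_mul]
    apply Finset.sum_congr rfl
    intro t ht
    rw [Finset.mem_range] at ht
    have hpow : b ^ (j - 1 - t) * b * b ^ (e - j) = b ^ (e - t) := by
      rw [← pow_succ, ← pow_add]
      congr 1
      omega
    calc x t * b ^ (j - 1 - t) * b * b ^ (e - j)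
        = x t * (b ^ (j - 1 - t) * b * b ^ (e - j)) := by ring
      _ = x t * b ^ (e - t) := by rw [hpow]
  have key2 : ∀ j ≤ e,
      ((∑ t ∈ Finset.range j, x t * b ^ (j - 1 - t)) * b + x j) * b ^ (e - j)
        = S (j + 1) := by
    intro j hj
    rw [add_mul, key j hj, hS]
    simp [Finset.sum_range_succ]
  have mono : Monotone S := by
    intro a c hac
    exact Finset.sum_le_sum_of_subset (Finset.range_subset_range.2 hac)
  have hSe : S (e + 1) = i := hrep.symm
  have hstep : ∀ j, S (j + 1) = S j + x j * b ^ (e - j) := by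
    intro j; simp [hS, Finset.sum_range_succ]
  constructor
  · intro j hj j' hj' hne
    simp only [Finset.coe_filter, Set.mem_setOf_eq, Finset.mem_range] at hj hj'
    have hj1 : j ≤ e := by omega
    have hj'1 : j' ≤ e := by omega
    have hdisj : ∀ p q : ℕ, p < q →
        Disjoint (Finset.Ioc (S p) (S (p + 1))) (Finset.Ioc (S q) (S (q + 1))) := by
      intro p q hpq
      have : S (p + 1) ≤ S q := mono hpq
      rw [Finset.disjoint_left]
      intro a ha ha'
      rw [Finset.mem_Ioc] at ha ha'
      omega
    have hfun : Function.onFun Disjoint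
        (fun j => Finset.Ioc (S j) (S (j + 1))) j j' := by
      rcases lt_or_gt_of_ne hne with h | h
      · exact hdisj j j' h
      · exact (hdisj j' j h).symm
    simpa only [Function.onFun, key j hj1, key2 j hj1, key j' hj'1, key2 j' hj'1]
      using hfun
  · ext a
    simp only [Finset.mem_biUnion, Finset.mem_filter, Finset.mem_range,
      Finset.mem_Ioc, Finset.mem_Icc]
    constructor
    · rintro ⟨j, ⟨hj, -⟩, ha1, ha2⟩
      have hj1 : j ≤ e := by omega
      rw [key j hj1] at ha1
      rw [key2 j hj1] at ha2
      have h1 : a ≤ S (e + 1) := le_trans ha2 (mono (by omega))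
      omega
    · rintro ⟨ha1, ha2⟩
      have h0 : S 0 < a := by simp [hS]; omega
      have h1 : a ≤ S (e + 1) := by omega
      obtain ⟨j, hj, h2, h3⟩ := fenwick_exists_step S a (e + 1) h0 h1
      have hj1 : j ≤ e := by omega
      refine ⟨j, ⟨hj, ?_⟩, ?_, ?_⟩
      · intro hx0
        have := hstep j
        rw [hx0] at this
        omega
      · rw [key j hj1]; exact h2
      · rw [key2 j hj1]; exact h3
end
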